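/- arXiv:1804.10886 — 9 statements merged into one kernel-verified Lean document; each statement's English description precedes it below -/
import Mathlib

section
/- If there exists a span of open morphisms between two diagrams F : C → A and G : D → A, with tip H : E → A and open morphisms (Φ,σ) : H → F and (Ψ,τ) : H → G, then the set R = {(Φ(e), τ_e ∘ σ_e⁻¹, Ψ(e)) | e ∈ E} is a bisimulation between F and G. -/
open CategoryTheory

universe v u

variable {A : Type u} [Category.{v} A]

/-- A morphism of diagrams `(Φ, σ)` from `F : C ⥤ A` to `G : D ⥤ A`:
a functor `Φ : C ⥤ D` together with a natural isomorphism `σ : F ≅ Φ ⋙ G`. -/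
structure DiagMor {C D : Type v} [SmallCategory C] [SmallCategory D]
    (F : C ⥤ A) (G : D ⥤ A) : Type (max u v) where
  Φ : C ⥤ D
  σ : F ≅ Φ ⋙ G

/-- A morphism of diagrams is open iff `Φ` is surjective on objects and a fibration. -/
def DiagMor.IsOpen {C D : Type v} [SmallCategory C] [SmallCategory D]
    {F : C ⥤ A} {G : D ⥤ A} (m : DiagMor F G) : Prop :=
  (∀ d : D, ∃ c : C, m.Φ.obj c = d) ∧
  (∀ (c : C) (d' : D) (j : m.Φ.obj c ⟶ d'),
    ∃ (c' : C) (i : c ⟶ c') (h : m.Φ.obj c' = d'), m.Φ.map i ≫ eqToHom h = j)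

/-- The type of triples `(c, f, d)` with `f : F(c) ≅ G(d)`. -/
abbrev BisimTriple {C D : Type v} [SmallCategory C] [SmallCategory D]
    (F : C ⥤ A) (G : D ⥤ A) : Type v :=
  Σ (c : C) (d : D), F.obj c ≅ G.obj d

/-- A bisimulation between diagrams `F` and `G`. -/
def IsBisimulation {C D : Type v} [SmallCategory C] [SmallCategory D]
    (F : C ⥤ A) (G : D ⥤ A) (R : Set (BisimTriple F G)) : Prop :=
  (∀ r ∈ R, ∀ (c' : C) (i : r.1 ⟶ c'),
    ∃ (d' : D) (j : r.2.1 ⟶ d') (g : F.obj c' ≅ G.obj d'),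
      F.map i ≫ g.hom = r.2.2.hom ≫ G.map j ∧ (⟨c', d', g⟩ : BisimTriple F G) ∈ R) ∧
  (∀ r ∈ R, ∀ (d' : D) (j : r.2.1 ⟶ d'),
    ∃ (c' : C) (i : r.1 ⟶ c') (g : F.obj c' ≅ G.obj d'),
      F.map i ≫ g.hom = r.2.2.hom ≫ G.map j ∧ (⟨c', d', g⟩ : BisimTriple F G) ∈ R) ∧
  (∀ c : C, ∃ (d : D) (f : F.obj c ≅ G.obj d), (⟨c, d, f⟩ : BisimTriple F G) ∈ R) ∧
  (∀ d : D, ∃ (c : C) (f : F.obj c ≅ G.obj d), (⟨c, d, f⟩ : BisimTriple F G) ∈ R)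

/-- Two diagrams are bisimilar if there is a span of open morphisms between them. -/
def Bisimilar {C D : Type v} [SmallCategory C] [SmallCategory D]
    (F : C ⥤ A) (G : D ⥤ A) : Prop :=
  ∃ (E : Cat.{v, v}) (H : E ⥤ A) (mF : DiagMor H F) (mG : DiagMor H G),
    mF.IsOpen ∧ mG.IsOpen

/-- If there is a span of open morphisms `(Φ,σ) : H → F` and `(Ψ,τ) : H → G`,
then `R = {(Φ(e), τ_e ∘ σ_e⁻¹, Ψ(e)) | e ∈ E}` is a bisimulation between `F` and `G`. -/
theorem stmt1 {C D E : Type v} [SmallCategory C] [SmallCategory D] [SmallCategory E]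
    (F : C ⥤ A) (G : D ⥤ A) (H : E ⥤ A)
    (mF : DiagMor H F) (mG : DiagMor H G) (hF : mF.IsOpen) (hG : mG.IsOpen) :
    IsBisimulation F G
      {r : BisimTriple F G |
        ∃ e : E, r = ⟨mF.Φ.obj e, mG.Φ.obj e, (mF.σ.app e).symm ≪≫ mG.σ.app e⟩} := by
  obtain ⟨surjF, fibF⟩ := hF
  obtain ⟨surjG, fibG⟩ := hG
  refine ⟨?_, ?_, ?_, ?_⟩
  · rintro r ⟨e, rfl⟩ c' i
    obtain ⟨e', k, h, hk⟩ := fibF e c' i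
    subst h
    simp only [eqToHom_refl, Category.comp_id] at hk
    subst hk
    refine ⟨mG.Φ.obj e', mG.Φ.map k, (mF.σ.app e').symm ≪≫ mG.σ.app e', ?_, ⟨e', rfl⟩⟩
    simp only [Iso.trans_hom, Iso.symm_hom, Iso.app_inv, Iso.app_hom]
    rw [← Category.assoc,
      show F.map (mF.Φ.map k) ≫ mF.σ.inv.app e' = mF.σ.inv.app e ≫ H.map k from
        mF.σ.inv.naturality k,
      Category.assoc,
      show H.map k ≫ mG.σ.hom.app e' = mG.σ.hom.app e ≫ G.map (mG.Φ.map k) from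
        mG.σ.hom.naturality k]
    simp
  · rintro r ⟨e, rfl⟩ d' j
    obtain ⟨e', k, h, hk⟩ := fibG e d' j
    subst h
    simp only [eqToHom_refl, Category.comp_id] at hk
    subst hk
    refine ⟨mF.Φ.obj e', mF.Φ.map k, (mF.σ.app e').symm ≪≫ mG.σ.app e', ?_, ⟨e', rfl⟩⟩
    simp only [Iso.trans_hom, Iso.symm_hom, Iso.app_inv, Iso.app_hom]
    rw [← Category.assoc,
      show F.map (mF.Φ.map k) ≫ mF.σ.inv.app e' = mF.σ.inv.app e ≫ H.map k from
        mF.σ.inv.naturality k,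
      Category.assoc,
      show H.map k ≫ mG.σ.hom.app e' = mG.σ.hom.app e ≫ G.map (mG.Φ.map k) from
        mG.σ.hom.naturality k]
    simp
  · intro c
    obtain ⟨e, rfl⟩ := surjF c
    exact ⟨mG.Φ.obj e, (mF.σ.app e).symm ≪≫ mG.σ.app e, ⟨e, rfl⟩⟩
  · intro d
    obtain ⟨e, rfl⟩ := surjG d
    exact ⟨mF.Φ.obj e, (mF.σ.app e).symm ≪≫ mG.σ.app e, ⟨e, rfl⟩⟩
end

section
/- If there is a bisimulation R between two diagrams F : C → A and G : D → A, then there exists a diagram H : E → A and open morphisms (Φ,σ) : H → F and (Ψ,τ) : H → G; concretely, one may take E to be the category whose objects are elements (c,f,d) of R and whose morphisms (c,f,d) → (c',f',d') are pairs (i,j) with i : c → c' in C, j : d → d' in D and f'∘F(i) = G(j)∘f, with H(c,f,d) = F(c). -/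
open CategoryTheory

universe v u

variable {A : Type u} [Category.{v} A]

section RelCat

variable {C D : Type v} [SmallCategory C] [SmallCategory D]
  {F : C ⥤ A} {G : D ⥤ A} (R : Set (BisimTriple F G))

/-- The category `E` whose objects are the elements `(c,f,d)` of `R` and whose morphisms
`(c,f,d) → (c',f',d')` are pairs `(i,j)` with `i : c ⟶ c'`, `j : d ⟶ d'` and
`f' ∘ F(i) = G(j) ∘ f`. -/
instance relCat : SmallCategory ↥R where
  Hom r r' :=
    { p : (r.val.1 ⟶ r'.val.1) × (r.val.2.1 ⟶ r'.val.2.1) //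
        F.map p.1 ≫ r'.val.2.2.hom = r.val.2.2.hom ≫ G.map p.2 }
  id r := ⟨(𝟙 _, 𝟙 _), by simp⟩
  comp p q := ⟨(p.val.1 ≫ q.val.1, p.val.2 ≫ q.val.2), by
    simp [Functor.map_comp, Category.assoc, q.property, reassoc_of% p.property]⟩
  id_comp := fun f => Subtype.ext (Prod.ext (by simp) (by simp))
  comp_id := fun f => Subtype.ext (Prod.ext (by simp) (by simp))
  assoc := fun f g h => Subtype.ext (Prod.ext (by simp) (by simp))

/-- The tip `H : E ⥤ A` of the span, with `H(c,f,d) = F(c)` and `H(i,j) = F(i)`. -/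
def relDiag : ↥R ⥤ A where
  obj r := F.obj r.val.1
  map p := F.map p.val.1
  map_id := fun r => by show F.map (𝟙 _) = _; simp
  map_comp := fun p q => by show F.map (p.val.1 ≫ q.val.1) = _; simp

/-- Projection to `C`. -/
def relProjC : ↥R ⥤ C where
  obj r := r.val.1
  map p := p.val.1
  map_id _ := rfl
  map_comp _ _ := rfl

/-- Projection to `D`. -/
def relProjD : ↥R ⥤ D where
  obj r := r.val.2.1
  map p := p.val.2
  map_id _ := rfl
  map_comp _ _ := rfl

/-- The open morphism to `F`. -/
def relMorF : DiagMor (relDiag R) F where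
  Φ := relProjC R
  σ := NatIso.ofComponents (fun r => Iso.refl _) (by intro r r' p; simp [relDiag, relProjC])

/-- The open morphism to `G`. -/
def relMorG : DiagMor (relDiag R) G where
  Φ := relProjD R
  σ := NatIso.ofComponents (fun r => r.val.2.2) (by intro r r' p; exact p.property)

end RelCat

/-- If there is a bisimulation `R` between diagrams `F` and `G`, then there is a
span of open morphisms between them; concretely, one may take as tip the diagram
`relDiag R : E ⥤ A` where `E` is the category of elements of `R`. -/
theorem stmt2 {C D : Type v} [SmallCategory C] [SmallCategory D]
    (F : C ⥤ A) (G : D ⥤ A) (R : Set (BisimTriple F G)) (hR : IsBisimulation F G R) :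
    (∃ (mF : DiagMor (relDiag R) F) (mG : DiagMor (relDiag R) G), mF.IsOpen ∧ mG.IsOpen) ∧
    Bisimilar F G := by
  obtain ⟨hFwd, hBwd, hSC, hSD⟩ := hR
  have hFopen : (relMorF R).IsOpen := by
    constructor
    · intro c
      obtain ⟨d, f, hf⟩ := hSC c
      exact ⟨⟨⟨c, d, f⟩, hf⟩, rfl⟩
    · rintro ⟨r, hr⟩ c' i
      obtain ⟨d', j, g, hcomm, hmem⟩ := hFwd r hr c' i
      exact ⟨⟨⟨c', d', g⟩, hmem⟩, ⟨(i, j), hcomm⟩, rfl, by exact Category.comp_id _⟩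
  have hGopen : (relMorG R).IsOpen := by
    constructor
    · intro d
      obtain ⟨c, f, hf⟩ := hSD d
      exact ⟨⟨⟨c, d, f⟩, hf⟩, rfl⟩
    · rintro ⟨r, hr⟩ d' j
      obtain ⟨c', i, g, hcomm, hmem⟩ := hBwd r hr d' j
      exact ⟨⟨⟨c', d', g⟩, hmem⟩, ⟨(i, j), hcomm⟩, rfl, by exact Category.comp_id _⟩
  refine ⟨⟨relMorF R, relMorG R, hFopen, hGopen⟩, ?_⟩
  exact ⟨Cat.of ↥R, relDiag R, relMorF R, relMorG R, hFopen, hGopen⟩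
end

section
/- Two diagrams F : C → A and G : D → A are bisimilar (connected by a span of open morphisms of diagrams) if and only if there exists a bisimulation between them. -/
open CategoryTheory

universe v u

variable {A : Type u} [Category.{v} A]

section Aux

variable {C D : Type v} [SmallCategory C] [SmallCategory D]
variable (F : C ⥤ A) (G : D ⥤ A)

/-- Morphisms in the category of a bisimulation. -/
@[ext]
structure BisimHom (R : Set (BisimTriple F G)) (r s : R) : Type v where
  i : r.1.1 ⟶ s.1.1
  j : r.1.2.1 ⟶ s.1.2.1
  sq : F.map i ≫ s.1.2.2.hom = r.1.2.2.hom ≫ G.map j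

instance bisimCat (R : Set (BisimTriple F G)) : Category.{v} (↥R) where
  Hom := BisimHom F G R
  id r := ⟨𝟙 _, 𝟙 _, by simp⟩
  comp {r s t} f g := ⟨f.i ≫ g.i, f.j ≫ g.j, by
    simp only [Functor.map_comp, Category.assoc, g.sq, reassoc_of% f.sq]⟩
  id_comp f := by apply BisimHom.ext <;> simp
  comp_id f := by apply BisimHom.ext <;> simp
  assoc f g h := by apply BisimHom.ext <;> simp

/-- The mediating diagram on the category of a bisimulation. -/
def bisimH (R : Set (BisimTriple F G)) : (↥R) ⥤ A where
  obj r := F.obj r.1.1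
  map f := F.map f.i
  map_id r := by simp [CategoryStruct.id]
  map_comp f g := by simp [CategoryStruct.comp]

/-- First projection from the category of a bisimulation. -/
def bisimPr1 (R : Set (BisimTriple F G)) : (↥R) ⥤ C where
  obj r := r.1.1
  map f := f.i
  map_id r := rfl
  map_comp f g := rfl

/-- Second projection from the category of a bisimulation. -/
def bisimPr2 (R : Set (BisimTriple F G)) : (↥R) ⥤ D where
  obj r := r.1.2.1
  map f := f.j
  map_id r := rfl
  map_comp f g := rfl

end Aux

/-- Two diagrams `F : C ⥤ A` and `G : D ⥤ A` are bisimilar (connected by a span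
of open morphisms of diagrams) if and only if there exists a bisimulation between them. -/
theorem stmt3 {C D : Type v} [SmallCategory C] [SmallCategory D]
    (F : C ⥤ A) (G : D ⥤ A) :
    Bisimilar F G ↔ ∃ R : Set (BisimTriple F G), IsBisimulation F G R := by
  constructor
  · rintro ⟨E, H, mF, mG, ⟨surjF, fibF⟩, ⟨surjG, fibG⟩⟩
    refine ⟨{t | ∃ e : E, t = ⟨mF.Φ.obj e, mG.Φ.obj e,
      (mF.σ.app e).symm ≪≫ mG.σ.app e⟩}, ?_, ?_, ?_, ?_⟩
    · rintro r ⟨e, rfl⟩ c' i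
      obtain ⟨e', k, h, hk⟩ := fibF e c' i
      subst h
      refine ⟨mG.Φ.obj e', mG.Φ.map k, (mF.σ.app e').symm ≪≫ mG.σ.app e', ?_, ⟨e', rfl⟩⟩
      rw [← hk]
      have n1 := mF.σ.inv.naturality k
      have n2 := mG.σ.hom.naturality k
      simp only [Functor.comp_map] at n1 n2
      simp only [eqToHom_refl, Category.comp_id, Iso.trans_hom, Iso.symm_hom,
        Iso.app_hom, Iso.app_inv, ← Category.assoc]
      rw [n1, Category.assoc, n2, Category.assoc]
    · rintro r ⟨e, rfl⟩ d' j
      obtain ⟨e', k, h, hk⟩ := fibG e d' j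
      subst h
      refine ⟨mF.Φ.obj e', mF.Φ.map k, (mF.σ.app e').symm ≪≫ mG.σ.app e', ?_, ⟨e', rfl⟩⟩
      rw [← hk]
      have n1 := mF.σ.inv.naturality k
      have n2 := mG.σ.hom.naturality k
      simp only [Functor.comp_map] at n1 n2
      simp only [eqToHom_refl, Category.comp_id, Iso.trans_hom, Iso.symm_hom,
        Iso.app_hom, Iso.app_inv, ← Category.assoc]
      rw [n1, Category.assoc, n2, Category.assoc]
    · intro c
      obtain ⟨e, rfl⟩ := surjF c
      exact ⟨mG.Φ.obj e, (mF.σ.app e).symm ≪≫ mG.σ.app e, ⟨e, rfl⟩⟩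
    · intro d
      obtain ⟨e, rfl⟩ := surjG d
      exact ⟨mF.Φ.obj e, (mF.σ.app e).symm ≪≫ mG.σ.app e, ⟨e, rfl⟩⟩
  · rintro ⟨R, h1, h2, h3, h4⟩
    refine ⟨Cat.of (↥R), bisimH F G R,
      ⟨bisimPr1 F G R, NatIso.ofComponents (fun r => Iso.refl _) (by
        intro r s f
        simp [bisimH, bisimPr1]; rfl)⟩,
      ⟨bisimPr2 F G R, NatIso.ofComponents (fun r => r.1.2.2) (by
        intro r s f
        exact f.sq)⟩,
      ⟨?_, ?_⟩, ⟨?_, ?_⟩⟩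
    · intro c
      obtain ⟨d, f, hf⟩ := h3 c
      exact ⟨⟨⟨c, d, f⟩, hf⟩, rfl⟩
    · intro r c' i
      obtain ⟨d', j, g, sq, mem⟩ := h1 r.1 r.2 c' i
      exact ⟨⟨⟨c', d', g⟩, mem⟩, ⟨i, j, sq⟩, rfl, Category.comp_id _⟩
    · intro d
      obtain ⟨c, f, hf⟩ := h4 d
      exact ⟨⟨⟨c, d, f⟩, hf⟩, rfl⟩
    · intro r d' j
      obtain ⟨c', i, g, sq, mem⟩ := h2 r.1 r.2 d' j
      exact ⟨⟨⟨c', d', g⟩, mem⟩, ⟨i, j, sq⟩, rfl, Category.comp_id _⟩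
end

section
/- If (Φ,σ) : F → G is an open morphism of diagrams, then for every object c of the domain of F and every object formula S of the diagrammatic path logic, F,c ⊨ S if and only if G,Φ(c) ⊨ S; consequently F and G are logically equivalent. -/
open CategoryTheory

universe v u

variable {A : Type u} [Category.{v} A]

/-- Morphism formulae of the diagrammatic path logic, located at an object `x` of `A`:
`⟨g⟩P` for `g : x ⟶ x'`, `?S` (where the object formula `S` is necessarily of the form
`[y]Q`), negation, and arbitrary conjunctions. -/
inductive MorForm (A : Type u) [Category.{v} A] : A → Type (max u (v + 1))
  | dia : ∀ {x x' : A}, (x ⟶ x') → MorForm A x' → MorForm A x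
  | query : ∀ {x : A} (y : A), MorForm A y → MorForm A x
  | neg : ∀ {x : A}, MorForm A x → MorForm A x
  | conj : ∀ {x : A} {I : Type v}, (I → MorForm A x) → MorForm A x

/-- Object formulae `[x]P` of the diagrammatic path logic. -/
structure ObjForm (A : Type u) [Category.{v} A] : Type (max u (v + 1)) where
  x : A
  P : MorForm A x

/-- Satisfaction `F, f, c ⊨ P` for a morphism formula `P` located at `x`,
where `f : F(c) ≅ x`. -/
def morSat {C : Type v} [SmallCategory C] (F : C ⥤ A) :
    (c : C) → (x : A) → (F.obj c ≅ x) → MorForm A x → Prop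
  | c, _, f, MorForm.dia (x' := x') g P =>
      ∃ (c' : C) (i : c ⟶ c') (h : F.obj c' ≅ x'),
        F.map i ≫ h.hom = f.hom ≫ g ∧ morSat F c' x' h P
  | c, _, _, MorForm.query y P => ∃ h : F.obj c ≅ y, morSat F c y h P
  | c, x, f, MorForm.neg P => ¬ morSat F c x f P
  | c, x, f, MorForm.conj P => ∀ i, morSat F c x f (P i)

/-- Satisfaction `F, c ⊨ [x]P` for object formulae. -/
def objSat {C : Type v} [SmallCategory C] (F : C ⥤ A) (c : C) (S : ObjForm A) : Prop :=
  ∃ f : F.obj c ≅ S.x, morSat F c S.x f S.P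

/-- `F` is logically simulated by `G`. -/
def LogSim {C D : Type v} [SmallCategory C] [SmallCategory D]
    (F : C ⥤ A) (G : D ⥤ A) : Prop :=
  ∀ c : C, ∃ d : D, ∀ S : ObjForm A, objSat F c S ↔ objSat G d S

/-- `F` and `G` are logically equivalent. -/
def LogEquiv {C D : Type v} [SmallCategory C] [SmallCategory D]
    (F : C ⥤ A) (G : D ⥤ A) : Prop :=
  LogSim F G ∧ LogSim G F

theorem key_morSat {C D : Type v} [SmallCategory C] [SmallCategory D]
    {F : C ⥤ A} {G : D ⥤ A} (m : DiagMor F G) (hm : m.IsOpen) :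
    ∀ {x : A} (P : MorForm A x) (c : C) (f : F.obj c ≅ x),
      morSat F c x f P ↔ morSat G (m.Φ.obj c) x ((m.σ.app c).symm ≪≫ f) P := by
  intro x P
  induction P with
  | @dia x x' g P ih =>
    intro c f
    constructor
    · rintro ⟨c', i, h, hcomm, hP⟩
      refine ⟨m.Φ.obj c', m.Φ.map i, (m.σ.app c').symm ≪≫ h, ?_, (ih c' h).mp hP⟩
      have nat := m.σ.inv.naturality i
      simp only [Iso.trans_hom, Iso.symm_hom, Iso.app_hom, Iso.app_inv,
        Functor.comp_map] at *
      rw [← Category.assoc, nat, Category.assoc, hcomm, Category.assoc]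
    · rintro ⟨d', j, h', hcomm, hP⟩
      obtain ⟨c', i, heq, hj⟩ := hm.2 c d' j
      subst heq
      simp only [eqToHom_refl, Category.comp_id] at hj
      subst hj
      have hiso : (m.σ.app c').symm ≪≫ (m.σ.app c' ≪≫ h') = h' := by
        ext; simp
      refine ⟨c', i, m.σ.app c' ≪≫ h', ?_, (ih c' (m.σ.app c' ≪≫ h')).mpr ?_⟩
      · have nat := m.σ.hom.naturality i
        simp only [Iso.trans_hom, Iso.symm_hom, Iso.app_hom, Iso.app_inv,
          Functor.comp_map] at *
        rw [← Category.assoc, nat, Category.assoc, hcomm]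
        simp
      · rw [hiso]; exact hP
  | @query x y P ih =>
    intro c f
    constructor
    · rintro ⟨h, hP⟩
      exact ⟨(m.σ.app c).symm ≪≫ h, (ih c h).mp hP⟩
    · rintro ⟨h', hP⟩
      have hiso : (m.σ.app c).symm ≪≫ (m.σ.app c ≪≫ h') = h' := by ext; simp
      refine ⟨m.σ.app c ≪≫ h', (ih c (m.σ.app c ≪≫ h')).mpr ?_⟩
      rw [hiso]; exact hP
  | neg P ih =>
    intro c f
    exact not_congr (ih c f)
  | conj P ih =>
    intro c f
    exact forall_congr' fun i => ih i c f

theorem key_objSat {C D : Type v} [SmallCategory C] [SmallCategory D]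
    {F : C ⥤ A} {G : D ⥤ A} (m : DiagMor F G) (hm : m.IsOpen)
    (c : C) (S : ObjForm A) : objSat F c S ↔ objSat G (m.Φ.obj c) S := by
  constructor
  · rintro ⟨f, hP⟩
    exact ⟨(m.σ.app c).symm ≪≫ f, (key_morSat m hm S.P c f).mp hP⟩
  · rintro ⟨f', hP⟩
    have hiso : (m.σ.app c).symm ≪≫ (m.σ.app c ≪≫ f') = f' := by ext; simp
    refine ⟨m.σ.app c ≪≫ f', (key_morSat m hm S.P c _).mpr ?_⟩
    rw [hiso]; exact hP

/-- if `(Φ,σ) : F → G` is an open morphism of diagrams, then every object `c`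
satisfies exactly the same object formulae as `Φ(c)`; consequently `F` and `G` are logically
equivalent. -/
theorem stmt6 {C D : Type v} [SmallCategory C] [SmallCategory D]
    {F : C ⥤ A} {G : D ⥤ A} (m : DiagMor F G) (hm : m.IsOpen) :
    (∀ (c : C) (S : ObjForm A), objSat F c S ↔ objSat G (m.Φ.obj c) S) ∧
    LogEquiv F G := by
  refine ⟨key_objSat m hm, ?_, ?_⟩
  · intro c
    exact ⟨m.Φ.obj c, key_objSat m hm c⟩
  · intro d
    obtain ⟨c, rfl⟩ := hm.1 d
    exact ⟨c, fun S => (key_objSat m hm c S).symm⟩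
end

section
/- If two diagrams F and G are logically equivalent for the diagrammatic path logic, then the relation R consisting of all triples (c,f,d) such that c and d satisfy the same object formulae, f : F(c) → G(d) is an isomorphism, and f factors as h₂⁻¹∘h₁ for isomorphisms h₁, h₂ with F,h₁,c and G,h₂,d satisfying the same morphism formulae, is a bisimulation between F and G. -/
open CategoryTheory

universe v u

variable {A : Type u} [Category.{v} A]

lemma morSat_neg {C : Type v} [SmallCategory C] (F : C ⥤ A) (c : C) {x : A}
    (f : F.obj c ≅ x) (P : MorForm A x) :
    morSat F c x f (MorForm.neg P) ↔ ¬ morSat F c x f P := by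
  simp [morSat]

lemma morSat_conj {C : Type v} [SmallCategory C] (F : C ⥤ A) (c : C) {x : A}
    (f : F.obj c ≅ x) {I : Type v} (P : I → MorForm A x) :
    morSat F c x f (MorForm.conj P) ↔ ∀ i, morSat F c x f (P i) := by
  simp [morSat]

lemma morSat_dia {C : Type v} [SmallCategory C] (F : C ⥤ A) (c : C) {x x' : A}
    (f : F.obj c ≅ x) (g : x ⟶ x') (P : MorForm A x') :
    morSat F c x f (MorForm.dia g P) ↔
      ∃ (c' : C) (i : c ⟶ c') (h : F.obj c' ≅ x'),
        F.map i ≫ h.hom = f.hom ≫ g ∧ morSat F c' x' h P := by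
  simp [morSat]

lemma morSat_query {C : Type v} [SmallCategory C] (F : C ⥤ A) (c : C) {x : A}
    (f : F.obj c ≅ x) (y : A) (P : MorForm A y) :
    morSat F c x f (MorForm.query y P) ↔ objSat F c ⟨y, P⟩ := by
  simp [morSat, objSat]

/-- If two pointed diagrams do not satisfy the same morphism formulae, there is a
distinguishing formula satisfied by the first and not by the second. -/
lemma distinguish {C D : Type v} [SmallCategory C] [SmallCategory D]
    (F : C ⥤ A) (G : D ⥤ A) (c : C) (d : D) {x : A}
    (f : F.obj c ≅ x) (g : G.obj d ≅ x)
    (h : ¬ ∀ P : MorForm A x, morSat F c x f P ↔ morSat G d x g P) :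
    ∃ P : MorForm A x, morSat F c x f P ∧ ¬ morSat G d x g P := by
  rw [not_forall] at h
  obtain ⟨P, hP⟩ := h
  by_cases hF : morSat F c x f P
  · exact ⟨P, hF, fun hG => hP ⟨fun _ => hG, fun _ => hF⟩⟩
  · have hG : morSat G d x g P := by tauto
    exact ⟨P.neg, (morSat_neg F c f P).2 hF, fun hn => (morSat_neg G d g P).1 hn hG⟩

/-- Hennessy–Milner style selection: if every conjunction satisfied on the left is
matched by some candidate on the right, then some candidate matches all formulae. -/
lemma pick {C D : Type v} [SmallCategory C] [SmallCategory D]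
    (F : C ⥤ A) (G : D ⥤ A) (c : C) {x : A} (f : F.obj c ≅ x)
    {K : Type v} (cd : K → D) (iso : ∀ k, G.obj (cd k) ≅ x)
    (hsat : ∀ P : K → MorForm A x, (∀ k, morSat F c x f (P k)) →
      ∃ k, morSat G (cd k) x (iso k) (P k)) :
    ∃ k, ∀ P, morSat F c x f P ↔ morSat G (cd k) x (iso k) P := by
  by_contra hc
  have hc' : ∀ k, ¬ ∀ P : MorForm A x, morSat F c x f P ↔ morSat G (cd k) x (iso k) P :=
    fun k hall => hc ⟨k, hall⟩
  choose P hP using fun k => distinguish F G c (cd k) f (iso k) (hc' k)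
  obtain ⟨k, hk⟩ := hsat P (fun k => (hP k).1)
  exact (hP k).2 hk

lemma objEquiv_of_morEquiv {C D : Type v} [SmallCategory C] [SmallCategory D]
    (F : C ⥤ A) (G : D ⥤ A) (c : C) (d : D) {x : A}
    (f : F.obj c ≅ x) (g : G.obj d ≅ x)
    (h : ∀ P : MorForm A x, morSat F c x f P ↔ morSat G d x g P) :
    ∀ S : ObjForm A, objSat F c S ↔ objSat G d S := by
  intro S
  have := h (MorForm.query S.x S.P)
  rw [morSat_query, morSat_query] at this
  exact this

/-- if `F` and `G` are logically equivalent, then the relation consisting of all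
triples `(c, f, d)` such that `c` and `d` satisfy the same object formulae and `f` factors as
`h₂⁻¹ ∘ h₁` for isomorphisms `h₁ : F(c) ≅ x`, `h₂ : G(d) ≅ x` with `F,h₁,c` and `G,h₂,d`
satisfying the same morphism formulae, is a bisimulation between `F` and `G`. -/
theorem stmt7 {C D : Type v} [SmallCategory C] [SmallCategory D]
    (F : C ⥤ A) (G : D ⥤ A) (h : LogEquiv F G) :
    IsBisimulation F G
      {r : BisimTriple F G |
        (∀ S : ObjForm A, objSat F r.1 S ↔ objSat G r.2.1 S) ∧
        ∃ (x : A) (h₁ : F.obj r.1 ≅ x) (h₂ : G.obj r.2.1 ≅ x),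
          r.2.2 = h₁ ≪≫ h₂.symm ∧
          ∀ P : MorForm A x, morSat F r.1 x h₁ P ↔ morSat G r.2.1 x h₂ P} := by
  classical
  obtain ⟨hFG, hGF⟩ := h
  refine ⟨?_, ?_, ?_, ?_⟩
  · -- forward lifting
    rintro ⟨c, d, g⟩ ⟨hobj, x, h₁, h₂, hg, hmor⟩ c' i
    have hghom : g.hom = h₁.hom ≫ h₂.inv := congrArg Iso.hom hg
    let g₀ : x ⟶ F.obj c' := h₁.inv ≫ F.map i
    have hsat : ∀ P : {p : Σ d' : D, (d ⟶ d') × (G.obj d' ≅ F.obj c') //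
          G.map p.2.1 ≫ p.2.2.hom = h₂.hom ≫ g₀} → MorForm A (F.obj c'),
        (∀ k, morSat F c' (F.obj c') (Iso.refl (F.obj c')) (P k)) →
        ∃ k, morSat G k.1.1 (F.obj c') k.1.2.2 (P k) := by
      intro P hP
      have hF : morSat F c x h₁ (MorForm.dia g₀ (MorForm.conj P)) := by
        rw [morSat_dia]
        exact ⟨c', i, Iso.refl _, by simp [g₀], (morSat_conj F c' _ P).2 hP⟩
      have hG := (hmor _).1 hF
      rw [morSat_dia] at hG
      obtain ⟨d', j, h', hsq, hall⟩ := hG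
      exact ⟨⟨⟨d', j, h'⟩, hsq⟩, (morSat_conj G d' _ P).1 hall _⟩
    obtain ⟨k, hk⟩ := pick F G c' (Iso.refl (F.obj c'))
      (K := {p : Σ d' : D, (d ⟶ d') × (G.obj d' ≅ F.obj c') //
        G.map p.2.1 ≫ p.2.2.hom = h₂.hom ≫ g₀})
      (fun k => k.1.1) (fun k => k.1.2.2) hsat
    refine ⟨k.1.1, k.1.2.1, Iso.refl _ ≪≫ k.1.2.2.symm, ?_, ?_⟩
    · have hsq := k.2
      simp only [g₀] at hsq
      simp only [Iso.trans_hom, Iso.refl_hom, Iso.symm_hom, Category.id_comp, hghom]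
      rw [Iso.comp_inv_eq]
      simp only [Category.assoc, hsq]
      simp
    · exact ⟨objEquiv_of_morEquiv F G c' k.1.1 _ _ hk, F.obj c', Iso.refl _,
        k.1.2.2, rfl, hk⟩
  · -- backward lifting
    rintro ⟨c, d, g⟩ ⟨hobj, x, h₁, h₂, hg, hmor⟩ d' j
    have hghom : g.hom = h₁.hom ≫ h₂.inv := congrArg Iso.hom hg
    let g₀ : x ⟶ G.obj d' := h₂.inv ≫ G.map j
    have hsat : ∀ P : {p : Σ c' : C, (c ⟶ c') × (F.obj c' ≅ G.obj d') //
          F.map p.2.1 ≫ p.2.2.hom = h₁.hom ≫ g₀} → MorForm A (G.obj d'),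
        (∀ k, morSat G d' (G.obj d') (Iso.refl (G.obj d')) (P k)) →
        ∃ k, morSat F k.1.1 (G.obj d') k.1.2.2 (P k) := by
      intro P hP
      have hG : morSat G d x h₂ (MorForm.dia g₀ (MorForm.conj P)) := by
        rw [morSat_dia]
        exact ⟨d', j, Iso.refl _, by simp [g₀], (morSat_conj G d' _ P).2 hP⟩
      have hF := (hmor _).2 hG
      rw [morSat_dia] at hF
      obtain ⟨c', i, h', hsq, hall⟩ := hF
      exact ⟨⟨⟨c', i, h'⟩, hsq⟩, (morSat_conj F c' _ P).1 hall _⟩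
    obtain ⟨k, hk⟩ := pick G F d' (Iso.refl (G.obj d'))
      (K := {p : Σ c' : C, (c ⟶ c') × (F.obj c' ≅ G.obj d') //
        F.map p.2.1 ≫ p.2.2.hom = h₁.hom ≫ g₀})
      (fun k => k.1.1) (fun k => k.1.2.2) hsat
    refine ⟨k.1.1, k.1.2.1, k.1.2.2 ≪≫ (Iso.refl _).symm, ?_, ?_⟩
    · have hsq := k.2
      simp only [g₀] at hsq
      simp only [Iso.trans_hom, Iso.refl_hom, Iso.symm_hom, Iso.refl_inv,
        Category.comp_id, hghom]
      rw [hsq]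
      simp
    · exact ⟨fun S => (objEquiv_of_morEquiv G F d' k.1.1 _ _ hk S).symm,
        G.obj d', k.1.2.2, Iso.refl _, rfl, fun P => (hk P).symm⟩
  · -- every c is covered
    intro c
    obtain ⟨d, hd⟩ := hFG c
    have hsat : ∀ P : (G.obj d ≅ F.obj c) → MorForm A (F.obj c),
        (∀ k, morSat F c (F.obj c) (Iso.refl (F.obj c)) (P k)) →
        ∃ k : G.obj d ≅ F.obj c, morSat G d (F.obj c) k (P k) := by
      intro P hP
      have hF : objSat F c ⟨F.obj c, MorForm.conj P⟩ :=
        ⟨Iso.refl _, (morSat_conj F c _ P).2 hP⟩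
      obtain ⟨h₂, hall⟩ := (hd _).1 hF
      exact ⟨h₂, (morSat_conj G d _ P).1 hall _⟩
    obtain ⟨k, hk⟩ := pick F G c (Iso.refl (F.obj c)) (K := G.obj d ≅ F.obj c) (fun _ => d) (fun k => k) hsat
    exact ⟨d, Iso.refl _ ≪≫ k.symm,
      objEquiv_of_morEquiv F G c d _ _ hk, F.obj c, Iso.refl _, k, rfl, hk⟩
  · -- every d is covered
    intro d
    obtain ⟨c, hc⟩ := hGF d
    have hsat : ∀ P : (F.obj c ≅ G.obj d) → MorForm A (G.obj d),
        (∀ k, morSat G d (G.obj d) (Iso.refl (G.obj d)) (P k)) →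
        ∃ k : F.obj c ≅ G.obj d, morSat F c (G.obj d) k (P k) := by
      intro P hP
      have hG : objSat G d ⟨G.obj d, MorForm.conj P⟩ :=
        ⟨Iso.refl _, (morSat_conj G d _ P).2 hP⟩
      obtain ⟨h₁, hall⟩ := (hc _).1 hG
      exact ⟨h₁, (morSat_conj F c _ P).1 hall _⟩
    obtain ⟨k, hk⟩ := pick G F d (Iso.refl (G.obj d)) (K := F.obj c ≅ G.obj d) (fun _ => c) (fun k => k) hsat
    exact ⟨c, k ≪≫ (Iso.refl _).symm,
      fun S => (objEquiv_of_morEquiv G F d c _ _ hk S).symm,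
      G.obj d, k, Iso.refl _, rfl, fun P => (hk P).symm⟩
end

section
/- Two diagrams are bisimilar if and only if they are logically equivalent for the diagrammatic path logic. -/
open CategoryTheory

universe v u

variable {A : Type u} [Category.{v} A]

/-! ### Auxiliary machinery -/

/-- Transport a morphism formula along an isomorphism of its location. -/
def MorForm.transport : {x y : A} → (e : x ≅ y) → MorForm A x → MorForm A y
  | _, _, e, .dia g P => .dia (e.inv ≫ g) P
  | _, _, _, .query z P => .query z P
  | _, _, e, .neg P => .neg (P.transport e)
  | _, _, e, .conj P => .conj (fun i => (P i).transport e)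

theorem morSat_transport {C : Type v} [SmallCategory C] (F : C ⥤ A) :
    ∀ {x : A} (P : MorForm A x) {y : A} (e : x ≅ y) (c : C) (h : F.obj c ≅ x),
    morSat F c y (h ≪≫ e) (P.transport e) ↔ morSat F c x h P
  | x, .dia g P, y, e, c, h => by
      simp only [MorForm.transport, morSat]
      constructor
      · rintro ⟨c', i, h', hc, hs⟩
        exact ⟨c', i, h', by simpa using hc, hs⟩
      · rintro ⟨c', i, h', hc, hs⟩
        refine ⟨c', i, h', ?_, hs⟩
        simp [hc]
  | x, .query z P, y, e, c, h => by
      simp only [MorForm.transport, morSat]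
  | x, .neg P, y, e, c, h => by
      simp only [MorForm.transport, morSat]
      exact not_congr (morSat_transport F P e c h)
  | x, .conj P, y, e, c, h => by
      simp only [MorForm.transport, morSat]
      exact forall_congr' fun i => morSat_transport F (P i) e c h

/-- Satisfaction only depends on the pair `(c, h)`; changing the iso by an equality. -/
theorem morSat_congr_iso {C : Type v} [SmallCategory C] (F : C ⥤ A)
    {x : A} (P : MorForm A x) (c : C) {h h' : F.obj c ≅ x} (e : h = h') :
    morSat F c x h P ↔ morSat F c x h' P := by subst e; rfl

/-- Satisfaction is invariant along open morphisms of diagrams. -/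
theorem morSat_open {E C : Type v} [SmallCategory E] [SmallCategory C]
    {H : E ⥤ A} {F : C ⥤ A} (m : DiagMor H F) (hm : m.IsOpen) :
    ∀ {x : A} (P : MorForm A x) (e : E) (f : H.obj e ≅ x),
    morSat H e x f P ↔ morSat F (m.Φ.obj e) x ((m.σ.app e).symm ≪≫ f) P
  | x, .dia (x' := x') g P, e, f => by
      simp only [morSat]
      constructor
      · rintro ⟨e', i, h, hc, hs⟩
        refine ⟨m.Φ.obj e', m.Φ.map i, (m.σ.app e').symm ≪≫ h, ?_, ?_⟩
        · have hnat := m.σ.hom.naturality i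
          simp only [Functor.comp_map] at hnat
          simp only [Iso.trans_hom, Iso.symm_hom, Iso.app_inv, Iso.app_hom, Category.assoc]
          calc F.map (m.Φ.map i) ≫ m.σ.inv.app e' ≫ h.hom
              = m.σ.inv.app e ≫ (m.σ.hom.app e ≫ F.map (m.Φ.map i)) ≫
                  m.σ.inv.app e' ≫ h.hom := by simp
            _ = m.σ.inv.app e ≫ (H.map i ≫ m.σ.hom.app e') ≫ m.σ.inv.app e' ≫ h.hom := by
                rw [hnat]
            _ = m.σ.inv.app e ≫ H.map i ≫ (m.σ.hom.app e' ≫ m.σ.inv.app e') ≫ h.hom := by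
                simp only [Category.assoc]
            _ = m.σ.inv.app e ≫ H.map i ≫ h.hom := by simp
            _ = m.σ.inv.app e ≫ f.hom ≫ g := by rw [hc]
        · exact (morSat_open m hm P e' h).mp hs
      · rintro ⟨c', j, h, hc, hs⟩
        obtain ⟨e', i, heq, hlift⟩ := hm.2 e c' j
        subst heq
        simp only [eqToHom_refl, Category.comp_id] at hlift
        subst hlift
        refine ⟨e', i, m.σ.app e' ≪≫ h, ?_, ?_⟩
        · have hnat := m.σ.hom.naturality i
          simp only [Functor.comp_map] at hnat
          simp only [Iso.trans_hom, Iso.app_hom, ← Category.assoc, hnat]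
          simp only [Iso.trans_hom, Iso.symm_hom, Iso.app_inv] at hc
          simp [Category.assoc, hc]
        · have := morSat_open m hm P e' (m.σ.app e' ≪≫ h)
          rw [morSat_congr_iso F P _ (show (m.σ.app e').symm ≪≫ (m.σ.app e' ≪≫ h) = h
            by simp [← Iso.trans_assoc])] at this
          exact this.mpr hs
  | x, .query z P, e, f => by
      simp only [morSat]
      constructor
      · rintro ⟨h, hs⟩
        exact ⟨(m.σ.app e).symm ≪≫ h, (morSat_open m hm P e h).mp hs⟩
      · rintro ⟨h, hs⟩
        refine ⟨m.σ.app e ≪≫ h, ?_⟩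
        have := (morSat_open m hm P e (m.σ.app e ≪≫ h))
        rw [morSat_congr_iso F P _ (show (m.σ.app e).symm ≪≫ (m.σ.app e ≪≫ h) = h
          by simp [← Iso.trans_assoc])] at this
        exact this.mpr hs
  | x, .neg P, e, f => by
      simp only [morSat]
      exact not_congr (morSat_open m hm P e f)
  | x, .conj P, e, f => by
      simp only [morSat]
      exact forall_congr' fun i => morSat_open m hm (P i) e f

theorem objSat_open {E C : Type v} [SmallCategory E] [SmallCategory C]
    {H : E ⥤ A} {F : C ⥤ A} (m : DiagMor H F) (hm : m.IsOpen) (e : E) (S : ObjForm A) :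
    objSat H e S ↔ objSat F (m.Φ.obj e) S := by
  constructor
  · rintro ⟨f, hs⟩
    exact ⟨(m.σ.app e).symm ≪≫ f, (morSat_open m hm S.P e f).mp hs⟩
  · rintro ⟨f, hs⟩
    refine ⟨m.σ.app e ≪≫ f, ?_⟩
    have := morSat_open m hm S.P e (m.σ.app e ≪≫ f)
    rw [morSat_congr_iso F S.P _ (show (m.σ.app e).symm ≪≫ (m.σ.app e ≪≫ f) = f by
      simp [← Iso.trans_assoc])] at this
    exact this.mpr hs

theorem logSim_of_span {E C D : Type v} [SmallCategory E] [SmallCategory C]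
    [SmallCategory D] {H : E ⥤ A} {F : C ⥤ A} {G : D ⥤ A}
    (mF : DiagMor H F) (mG : DiagMor H G) (hF : mF.IsOpen) (hG : mG.IsOpen) :
    LogSim F G := by
  intro c
  obtain ⟨e, he⟩ := hF.1 c
  subst he
  exact ⟨mG.Φ.obj e, fun S =>
    ((objSat_open mF hF e S).symm.trans (objSat_open mG hG e S))⟩

section BisimCat

variable {C D : Type v} [SmallCategory C] [SmallCategory D]
  (F : C ⥤ A) (G : D ⥤ A) (R : Set (BisimTriple F G))

/-- Morphisms of the category of triples in `R`. -/
@[ext] structure BTHom (t t' : R) : Type v where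
  i : (t : BisimTriple F G).1 ⟶ (t' : BisimTriple F G).1
  j : (t : BisimTriple F G).2.1 ⟶ (t' : BisimTriple F G).2.1
  comm : F.map i ≫ (t' : BisimTriple F G).2.2.hom
       = (t : BisimTriple F G).2.2.hom ≫ G.map j

instance bisimCategory : Category (↥R) where
  Hom := BTHom F G R
  id t := ⟨𝟙 _, 𝟙 _, by simp⟩
  comp f g := ⟨f.i ≫ g.i, f.j ≫ g.j, by
    simp only [Functor.map_comp, Category.assoc, g.comm, reassoc_of% f.comm]⟩
  id_comp f := by apply BTHom.ext <;> simp
  comp_id f := by apply BTHom.ext <;> simp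
  assoc f g h := by apply BTHom.ext <;> simp

/-- Projection to `C`. -/
def projC : (↥R) ⥤ C where
  obj t := (t : BisimTriple F G).1
  map f := f.i

/-- Projection to `D`. -/
def projD : (↥R) ⥤ D where
  obj t := (t : BisimTriple F G).2.1
  map f := f.j

/-- The natural isomorphism making the second leg of the span. -/
def spanIso : (projC F G R ⋙ F) ≅ (projD F G R ⋙ G) :=
  NatIso.ofComponents (fun t => (t : BisimTriple F G).2.2) (fun f => f.comm)

theorem bisimilar_of_bisimulation (hR : IsBisimulation F G R) : Bisimilar F G := by
  obtain ⟨h1, h2, h3, h4⟩ := hR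
  refine ⟨Cat.of ↥R, projC F G R ⋙ F, ⟨projC F G R, Iso.refl _⟩,
    ⟨projD F G R, spanIso F G R⟩,
    ⟨?_, ?_⟩, ⟨?_, ?_⟩⟩
  · intro c
    obtain ⟨d, f, hmem⟩ := h3 c
    exact ⟨⟨⟨c, d, f⟩, hmem⟩, rfl⟩
  · intro t c' i
    obtain ⟨d', j, g, hsq, hmem⟩ := h1 t.1 t.2 c' i
    exact ⟨⟨⟨c', d', g⟩, hmem⟩, ⟨i, j, hsq⟩, rfl, by simp [projC]; exact Category.comp_id _⟩
  · intro d
    obtain ⟨c, f, hmem⟩ := h4 d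
    exact ⟨⟨⟨c, d, f⟩, hmem⟩, rfl⟩
  · intro t d' j
    obtain ⟨c', i, g, hsq, hmem⟩ := h2 t.1 t.2 d' j
    exact ⟨⟨⟨c', d', g⟩, hmem⟩, ⟨i, j, hsq⟩, rfl, by simp [projD]; exact Category.comp_id _⟩

end BisimCat

section LogRel

variable {C D : Type v} [SmallCategory C] [SmallCategory D] (F : C ⥤ A) (G : D ⥤ A)

/-- The relation of logically equivalent triples. -/
def logRel : Set (BisimTriple F G) :=
  {t | ∀ P : MorForm A (F.obj t.1),
    morSat F t.1 (F.obj t.1) (Iso.refl _) P ↔ morSat G t.2.1 (F.obj t.1) t.2.2.symm P}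

theorem exists_distinguishing {c : C} {d : D} {f : F.obj c ≅ G.obj d}
    (h : (⟨c, d, f⟩ : BisimTriple F G) ∉ logRel F G) :
    ∃ P : MorForm A (F.obj c),
      morSat F c (F.obj c) (Iso.refl _) P ∧ ¬ morSat G d (F.obj c) f.symm P := by
  simp only [logRel, Set.mem_setOf_eq, not_forall] at h
  obtain ⟨P, hP⟩ := h
  rcases Classical.em (morSat F c (F.obj c) (Iso.refl _) P) with hF | hF
  · exact ⟨P, hF, fun hG => hP ⟨fun _ => hG, fun _ => hF⟩⟩
  · refine ⟨.neg P, hF, ?_⟩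
    have hG : morSat G d (F.obj c) f.symm P := by
      by_contra hG
      exact hP ⟨fun h' => absurd h' hF, fun h' => absurd h' hG⟩
    simpa [morSat] using hG

theorem exists_distinguishing' {c : C} {d : D} {f : F.obj c ≅ G.obj d}
    (h : (⟨c, d, f⟩ : BisimTriple F G) ∉ logRel F G) :
    ∃ P : MorForm A (F.obj c),
      ¬ morSat F c (F.obj c) (Iso.refl _) P ∧ morSat G d (F.obj c) f.symm P := by
  obtain ⟨P, hF, hG⟩ := exists_distinguishing F G h
  exact ⟨.neg P, by simpa [morSat] using hF, hG⟩

theorem logRel_isBisimulation (h1 : LogSim F G) (h2 : LogSim G F) :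
    IsBisimulation F G (logRel F G) := by
  refine ⟨?_, ?_, ?_, ?_⟩
  · -- forward lifting
    rintro ⟨c, d, f⟩ hr c' i
    by_contra hcon
    push_neg at hcon
    set T := {p : Σ d' : D, (d ⟶ d') × (F.obj c' ≅ G.obj d') //
      F.map i ≫ p.2.2.hom = f.hom ≫ G.map p.2.1} with hT
    have hch : ∀ t : T, ∃ P : MorForm A (F.obj c'),
        morSat F c' (F.obj c') (Iso.refl _) P ∧
        ¬ morSat G t.1.1 (F.obj c') t.1.2.2.symm P := by
      rintro ⟨⟨d', j, g⟩, hsq⟩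
      exact exists_distinguishing F G fun hmem => hcon d' j g hsq hmem
    choose P hPF hPG using hch
    have hQF : morSat F c (F.obj c) (Iso.refl _)
        (MorForm.dia (F.map i) (MorForm.conj P)) := by
      refine ⟨c', i, Iso.refl _, by simp, ?_⟩
      intro t; exact hPF t
    have hQG := (hr _).mp hQF
    obtain ⟨d'', j, hiso, hsq, hconj⟩ := hQG
    have hsq' : F.map i ≫ hiso.symm.hom = f.hom ≫ G.map j := by
      simp only [Iso.symm_hom, Iso.comp_inv_eq, Category.assoc, hsq]
      simp
    set t0 : T := ⟨⟨d'', j, hiso.symm⟩, hsq'⟩ with ht0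
    have := hconj t0
    have hneg := hPG t0
    rw [Iso.symm_symm_eq] at hneg
    exact hneg this
  · -- backward lifting
    rintro ⟨c, d, f⟩ hr d' j
    by_contra hcon
    push_neg at hcon
    set T := {p : Σ c' : C, (c ⟶ c') × (F.obj c' ≅ G.obj d') //
      F.map p.2.1 ≫ p.2.2.hom = f.hom ≫ G.map j} with hT
    have hch : ∀ t : T, ∃ P : MorForm A (F.obj t.1.1),
        ¬ morSat F t.1.1 (F.obj t.1.1) (Iso.refl _) P ∧
        morSat G d' (F.obj t.1.1) t.1.2.2.symm P := by
      rintro ⟨⟨c', i, g⟩, hsq⟩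
      exact exists_distinguishing' F G fun hmem => hcon c' i g hsq hmem
    choose P hPF hPG using hch
    set P' : T → MorForm A (G.obj d') := fun t => (P t).transport t.1.2.2 with hP'
    have hP'G : ∀ t : T, morSat G d' (G.obj d') (Iso.refl _) (P' t) := by
      intro t
      have := (morSat_transport G (P t) t.1.2.2 d' t.1.2.2.symm).mpr (hPG t)
      rwa [morSat_congr_iso G _ _ (Iso.symm_self_id _)] at this
    have hQG : morSat G d (F.obj c) f.symm
        (MorForm.dia (f.hom ≫ G.map j) (MorForm.conj P')) := by
      refine ⟨d', j, Iso.refl _, by simp, ?_⟩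
      intro t; exact hP'G t
    have hQF := (hr _).mpr hQG
    obtain ⟨c'', i, hiso, hsq, hconj⟩ := hQF
    have hsq' : F.map i ≫ hiso.hom = f.hom ≫ G.map j := by simpa using hsq
    set t0 : T := ⟨⟨c'', i, hiso⟩, hsq'⟩ with ht0
    have hsat := hconj t0
    have : morSat F c'' (F.obj c'') (Iso.refl _) (P t0) := by
      have := (morSat_transport F (P t0) hiso c'' (Iso.refl _))
      rw [morSat_congr_iso F _ _ (Iso.refl_trans hiso)] at this
      exact this.mp hsat
    exact hPF t0 this
  · -- totality on C
    intro c
    obtain ⟨d, hd⟩ := h1 c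
    by_contra hcon
    push_neg at hcon
    have hch : ∀ g : F.obj c ≅ G.obj d, ∃ P : MorForm A (F.obj c),
        morSat F c (F.obj c) (Iso.refl _) P ∧ ¬ morSat G d (F.obj c) g.symm P :=
      fun g => exists_distinguishing F G (hcon d g)
    choose P hPF hPG using hch
    have hSF : objSat F c ⟨F.obj c, MorForm.conj P⟩ :=
      ⟨Iso.refl _, fun g => hPF g⟩
    obtain ⟨h, hc⟩ := (hd _).mp hSF
    have := hc h.symm
    have hneg := hPG h.symm
    rw [Iso.symm_symm_eq] at hneg
    exact hneg this
  · -- totality on D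
    intro d
    obtain ⟨c, hcEq⟩ := h2 d
    by_contra hcon
    push_neg at hcon
    have hch : ∀ g : F.obj c ≅ G.obj d, ∃ P : MorForm A (F.obj c),
        morSat F c (F.obj c) (Iso.refl _) P ∧ ¬ morSat G d (F.obj c) g.symm P :=
      fun g => exists_distinguishing F G (hcon c g)
    choose P hPF hPG using hch
    have hSF : objSat F c ⟨F.obj c, MorForm.conj P⟩ :=
      ⟨Iso.refl _, fun g => hPF g⟩
    obtain ⟨h, hc⟩ := (hcEq _).mpr hSF
    have := hc h.symm
    have hneg := hPG h.symm
    rw [Iso.symm_symm_eq] at hneg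
    exact hneg this

end LogRel

/-- two diagrams are bisimilar if and only if they are logically equivalent
for the diagrammatic path logic. -/
theorem stmt8 {C D : Type v} [SmallCategory C] [SmallCategory D]
    (F : C ⥤ A) (G : D ⥤ A) :
    Bisimilar F G ↔ LogEquiv F G := by
  constructor
  · rintro ⟨E, H, mF, mG, hF, hG⟩
    exact ⟨logSim_of_span mF mG hF hG, logSim_of_span mG mF hG hF⟩
  · rintro ⟨h1, h2⟩
    exact bisimilar_of_bisimulation F G _ (logRel_isBisimulation F G h1 h2)
end

section
/- Let a formula of the existential theory of invertible matrices be given: natural numbers n₁,…,n_k, and finitely many predicates of the form A_j · X_{i_j} = X_{l_j} · B_j where A_j, B_j are rational matrices of size n_{l_j} × n_{i_j}. Then there exist invertible real matrices M₁,…,M_k (M_i of size n_i × n_i) satisfying all the predicates if and only if there exist invertible rational matrices satisfying all the predicates. -/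
open Finset


lemma li_real {ι : Type*} [Fintype ι] {d : ℕ} {v : Fin d → ι → ℚ}
    (hv : LinearIndependent ℚ v) :
    LinearIndependent ℝ (fun j (a : ι) => (v j a : ℝ)) := by
  classical
  let f : (Fin d → ℚ) →ₗ[ℚ] (ι → ℚ) :=
    { toFun := fun c => ∑ j, c j • v j
      map_add' := by intro x y; simp [add_smul, Finset.sum_add_distrib]
      map_smul' := by intro r x; simp [smul_smul, Finset.smul_sum] }
  have hker : LinearMap.ker f = ⊥ := by
    rw [LinearMap.ker_eq_bot']
    intro c hc
    exact funext (Fintype.linearIndependent_iff.mp hv c hc)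
  obtain ⟨g, hg⟩ := f.exists_leftInverse_of_injective hker
  -- δ identity
  have hδ : ∀ j j' : Fin d, ∑ a, v j a * g (Pi.single a 1) j'
      = if j = j' then 1 else 0 := by
    intro j j'
    have h1 : f (Pi.single j 1) = v j := by
      simp only [f, LinearMap.coe_mk, AddHom.coe_mk]
      rw [Finset.sum_eq_single j]
      · simp
      · intro b _ hb; simp [Pi.single_apply, hb.symm]
      · simp
    have h2 : g (v j) = Pi.single j 1 := by
      rw [← h1]
      exact congr_fun (congr_arg (·.toFun) hg) (Pi.single j 1)
    have h3 : v j = ∑ a, v j a • (Pi.single a (1:ℚ) : ι → ℚ) := by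
      funext b; simp [Pi.single_apply]
    calc ∑ a, v j a * g (Pi.single a 1) j'
        = g (∑ a, v j a • (Pi.single a (1:ℚ) : ι → ℚ)) j' := by
          rw [map_sum]; simp [Finset.sum_apply]
      _ = (Pi.single j 1 : Fin d → ℚ) j' := by rw [← h3, h2]
      _ = if j = j' then 1 else 0 := by simp [Pi.single_apply, eq_comm]
  rw [Fintype.linearIndependent_iff]
  intro c hc j'
  have hca : ∀ a : ι, ∑ j, c j * (v j a : ℝ) = 0 := by
    intro a
    have := congr_fun hc a
    simpa [Finset.sum_apply] using this
  calc c j' = ∑ j, c j * ((if j = j' then 1 else 0 : ℚ) : ℝ) := by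
        rw [Finset.sum_eq_single j'] <;> simp +contextual
    _ = ∑ j, c j * ((∑ a, v j a * g (Pi.single a 1) j' : ℚ) : ℝ) := by
        simp_rw [hδ]
    _ = ∑ j, ∑ a, (g (Pi.single a 1) j' : ℝ) * (c j * (v j a : ℝ)) := by
        push_cast
        refine Finset.sum_congr rfl fun j _ => ?_
        rw [Finset.mul_sum]
        exact Finset.sum_congr rfl fun a _ => by ring
    _ = ∑ a, ∑ j, (g (Pi.single a 1) j' : ℝ) * (c j * (v j a : ℝ)) :=
        Finset.sum_comm
    _ = ∑ a, (g (Pi.single a 1) j' : ℝ) * (∑ j, c j * (v j a : ℝ)) := by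
        refine Finset.sum_congr rfl fun a _ => ?_
        rw [Finset.mul_sum]
    _ = 0 := by simp [hca]
open Finset Submodule Module

section
variable {ι : Type*} [Fintype ι]

lemma finrank_span_image (W : Submodule ℚ (ι → ℚ)) :
    Module.finrank ℝ (Submodule.span ℝ ((fun (x : ι → ℚ) (a : ι) => (x a : ℝ)) '' W)) =
      Module.finrank ℚ W := by
  classical
  set c : (ι → ℚ) → (ι → ℝ) := fun x a => (x a : ℝ) with hc
  let b := Module.finBasis ℚ W
  set v : Fin (Module.finrank ℚ W) → ι → ℚ := fun j => (b j : ι → ℚ) with hv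
  have hvW : ∀ j, v j ∈ W := fun j => (b j).2
  have hli : LinearIndependent ℚ v :=
    b.linearIndependent.map' W.subtype (Submodule.ker_subtype W)
  have hli' : LinearIndependent ℝ (fun j => c (v j)) := li_real hli
  have hspan : Submodule.span ℝ (c '' W) = Submodule.span ℝ (Set.range fun j => c (v j)) := by
    apply le_antisymm
    · rw [Submodule.span_le]
      rintro _ ⟨x, hx, rfl⟩
      have hx2 : x = ∑ j, b.repr ⟨x, hx⟩ j • v j := by
        have h := b.sum_repr ⟨x, hx⟩
        have h2 := congrArg (Submodule.subtype W) h
        simpa only [map_sum, map_smul, Submodule.subtype_apply, hv] using h2.symm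
      have : c x = ∑ j, ((b.repr ⟨x, hx⟩ j : ℝ)) • c (v j) := by
        conv_lhs => rw [hx2]
        funext a
        simp only [hc, Finset.sum_apply, Pi.smul_apply, smul_eq_mul]
        push_cast
        rfl
      rw [this]
      exact Submodule.sum_mem _ fun j _ =>
        Submodule.smul_mem _ _ (Submodule.subset_span ⟨j, rfl⟩)
    · rw [Submodule.span_le]
      rintro _ ⟨j, rfl⟩
      exact Submodule.subset_span ⟨v j, hvW j, rfl⟩
  rw [hspan, finrank_span_eq_card hli', Fintype.card_fin]

omit [Fintype ι] in
lemma span_subset_closure (W : Submodule ℚ (ι → ℚ)) :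
    (Submodule.span ℝ ((fun (x : ι → ℚ) (a : ι) => (x a : ℝ)) '' W) : Set (ι → ℝ)) ⊆
      closure ((fun (x : ι → ℚ) (a : ι) => (x a : ℝ)) '' W) := by
  classical
  set c : (ι → ℚ) → (ι → ℝ) := fun x a => (x a : ℝ) with hc
  set S : Set (ι → ℝ) := c '' W with hS
  have h0 : (0 : ι → ℝ) ∈ S := ⟨0, W.zero_mem, by funext a; simp [hc]⟩
  have hadd : ∀ x ∈ S, ∀ y ∈ S, x + y ∈ S := by
    rintro _ ⟨x, hx, rfl⟩ _ ⟨y, hy, rfl⟩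
    exact ⟨x + y, W.add_mem hx hy, by funext a; simp [hc]⟩
  have hsmul_cl : ∀ (r : ℝ), ∀ z ∈ S, r • z ∈ closure S := by
    rintro r _ ⟨x, hx, rfl⟩
    have hr : r ∈ closure (Set.range ((↑) : ℚ → ℝ)) := Rat.denseRange_cast r
    have hcont : Continuous fun t : ℝ => t • c x := continuous_id.smul continuous_const
    have h1 := image_closure_subset_closure_image (s := Set.range ((↑) : ℚ → ℝ)) hcont
      ⟨r, hr, rfl⟩
    refine closure_mono ?_ h1
    rintro _ ⟨_, ⟨q, rfl⟩, rfl⟩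
    refine ⟨q • x, W.smul_mem q hx, ?_⟩
    funext a; simp [hc]
  have hsmul : ∀ (r : ℝ), ∀ z ∈ closure S, r • z ∈ closure S := by
    intro r z hz
    have h1 := image_closure_subset_closure_image (s := S) (continuous_const_smul r) ⟨z, hz, rfl⟩
    have h2 : (fun t : ι → ℝ => r • t) '' S ⊆ closure S := by
      rintro _ ⟨z', hz', rfl⟩; exact hsmul_cl r z' hz'
    have := closure_mono h2 h1
    rwa [closure_closure] at this
  let S₀ : AddSubmonoid (ι → ℝ) :=
    { carrier := S, zero_mem' := h0, add_mem' := fun ha hb => hadd _ ha _ hb }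
  let P : Submodule ℝ (ι → ℝ) :=
    { carrier := closure S
      zero_mem' := subset_closure h0
      add_mem' := fun hx hy => S₀.topologicalClosure.add_mem hx hy
      smul_mem' := fun r x hx => hsmul r x hx }
  exact fun z hz => (Submodule.span_le (p := P)).mpr subset_closure hz

lemma key {κ : Type*} [Fintype κ]
    (T : (ι → ℚ) →ₗ[ℚ] (κ → ℚ)) (T' : (ι → ℝ) →ₗ[ℝ] (κ → ℝ))
    (hTT' : ∀ x : ι → ℚ, T' (fun a => (x a : ℝ)) = fun b => ((T x b : ℚ) : ℝ))
    {U : Set (ι → ℝ)} (hU : IsOpen U)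
    {y : ι → ℝ} (hy : T' y = 0) (hyU : y ∈ U) :
    ∃ x : ι → ℚ, T x = 0 ∧ (fun a => (x a : ℝ)) ∈ U := by
  classical
  set c : (ι → ℚ) → (ι → ℝ) := fun x a => (x a : ℝ) with hc
  have hle : Submodule.span ℝ (c '' (LinearMap.ker T : Set (ι → ℚ))) ≤ LinearMap.ker T' := by
    rw [Submodule.span_le]
    rintro _ ⟨x, hx, rfl⟩
    rw [SetLike.mem_coe, LinearMap.mem_ker] at hx ⊢
    rw [hTT' x, hx]
    funext b; simp
  have h1 : finrank ℝ (Submodule.span ℝ (c '' (LinearMap.ker T : Set (ι → ℚ)))) =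
      finrank ℚ (LinearMap.ker T) := finrank_span_image _
  have h2 : finrank ℚ (LinearMap.range T) + finrank ℚ (LinearMap.ker T) =
      Fintype.card ι := by
    rw [LinearMap.finrank_range_add_finrank_ker, Module.finrank_fintype_fun_eq_card]
  have h3 : finrank ℝ (LinearMap.range T') + finrank ℝ (LinearMap.ker T') =
      Fintype.card ι := by
    rw [LinearMap.finrank_range_add_finrank_ker, Module.finrank_fintype_fun_eq_card]
  have h4 : finrank ℚ (LinearMap.range T) ≤ finrank ℝ (LinearMap.range T') := by
    have hsub : Submodule.span ℝ
        ((fun (x : κ → ℚ) (b : κ) => (x b : ℝ)) '' (LinearMap.range T : Set (κ → ℚ))) ≤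
        LinearMap.range T' := by
      rw [Submodule.span_le]
      rintro _ ⟨z, hz, rfl⟩
      rw [SetLike.mem_coe, LinearMap.mem_range] at hz
      obtain ⟨x, rfl⟩ := hz
      exact ⟨c x, (hTT' x)⟩
    calc finrank ℚ (LinearMap.range T)
        = finrank ℝ (Submodule.span ℝ
            ((fun (x : κ → ℚ) (b : κ) => (x b : ℝ)) '' (LinearMap.range T : Set (κ → ℚ)))) :=
          (finrank_span_image _).symm
      _ ≤ finrank ℝ (LinearMap.range T') := Submodule.finrank_mono hsub
  have h5 : finrank ℝ (LinearMap.ker T') ≤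
      finrank ℝ (Submodule.span ℝ (c '' (LinearMap.ker T : Set (ι → ℚ)))) := by omega
  have heq : Submodule.span ℝ (c '' (LinearMap.ker T : Set (ι → ℚ))) = LinearMap.ker T' :=
    Submodule.eq_of_le_of_finrank_le hle h5
  have hy2 : y ∈ closure (c '' (LinearMap.ker T : Set (ι → ℚ))) := by
    apply span_subset_closure (LinearMap.ker T)
    rw [heq]
    exact hy
  obtain ⟨z, hzU, x, hx, rfl⟩ := mem_closure_iff.mp hy2 U hU hyU
  exact ⟨x, hx, hzU⟩

end
section Main

variable {k : ℕ} {n : Fin k → ℕ} {m : ℕ} {i l : Fin m → Fin k}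

/-- unflatten a vector into a family of square matrices -/
def matOf {R : Type*} (x : (Σ s : Fin k, Fin (n s) × Fin (n s)) → R) (s : Fin k) :
    Matrix (Fin (n s)) (Fin (n s)) R :=
  Matrix.of fun a b => x ⟨s, (a, b)⟩

/-- the linear map encoding the system of equations -/
def Tmap (R : Type*) [CommRing R]
    (A B : ∀ j : Fin m, Matrix (Fin (n (l j))) (Fin (n (i j))) R) :
    ((Σ s : Fin k, Fin (n s) × Fin (n s)) → R) →ₗ[R]
      ((Σ j : Fin m, Fin (n (l j)) × Fin (n (i j))) → R) where
  toFun x := fun p => (A p.1 * matOf x (i p.1) - matOf x (l p.1) * B p.1) p.2.1 p.2.2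
  map_add' x y := by
    funext p
    simp only [matOf, Matrix.sub_apply, Matrix.mul_apply, Matrix.of_apply, Pi.add_apply,
      mul_add, add_mul, Finset.sum_add_distrib]
    ring
  map_smul' r x := by
    funext p
    simp only [matOf, Matrix.sub_apply, Matrix.mul_apply, Matrix.of_apply, Pi.smul_apply,
      smul_eq_mul, RingHom.id_apply]
    rw [mul_sub, Finset.mul_sum, Finset.mul_sum]
    congr 1 <;> exact Finset.sum_congr rfl fun t _ => by ring

/-- a formula of the existential theory of invertible matrices, given by sizes
`n 0, …, n (k-1)` and finitely many predicates `A_j · X_{i j} = X_{l j} · B_j` with rational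
matrices `A_j, B_j` of size `n (l j) × n (i j)`, is satisfiable by invertible real matrices
if and only if it is satisfiable by invertible rational matrices. -/
theorem stmt13 (k : ℕ) (n : Fin k → ℕ) (m : ℕ) (i l : Fin m → Fin k)
    (A : ∀ j : Fin m, Matrix (Fin (n (l j))) (Fin (n (i j))) ℚ)
    (B : ∀ j : Fin m, Matrix (Fin (n (l j))) (Fin (n (i j))) ℚ) :
    (∃ M : ∀ s : Fin k, Matrix (Fin (n s)) (Fin (n s)) ℝ,
      (∀ s, IsUnit (M s)) ∧
        ∀ j, (A j).map ((↑) : ℚ → ℝ) * M (i j) = M (l j) * (B j).map ((↑) : ℚ → ℝ)) ↔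
    (∃ M : ∀ s : Fin k, Matrix (Fin (n s)) (Fin (n s)) ℚ,
      (∀ s, IsUnit (M s)) ∧ ∀ j, A j * M (i j) = M (l j) * B j) := by
  classical
  constructor
  · rintro ⟨M, hMu, hMe⟩
    set A' := fun j => (A j).map ((↑) : ℚ → ℝ) with hA'
    set B' := fun j => (B j).map ((↑) : ℚ → ℝ) with hB'
    -- flattened data
    set T : _ →ₗ[ℚ] _ := Tmap (n := n) (i := i) (l := l) ℚ A B with hT
    set T' : _ →ₗ[ℝ] _ := Tmap (n := n) (i := i) (l := l) ℝ A' B' with hT'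
    have hmat : ∀ (x : (Σ s : Fin k, Fin (n s) × Fin (n s)) → ℚ) (s : Fin k),
        matOf (fun a => (x a : ℝ)) s = (matOf x s).map ((↑) : ℚ → ℝ) := by
      intro x s; rfl
    have hTT' : ∀ x, T' (fun a => (x a : ℝ)) = fun b => ((T x b : ℚ) : ℝ) := by
      intro x
      funext p
      simp only [hT, hT', Tmap, LinearMap.coe_mk, AddHom.coe_mk, hmat, hA', hB',
        Matrix.sub_apply, Matrix.mul_apply, Matrix.map_apply]
      push_cast
      rfl
    -- the open set of invertible tuples
    set U : Set ((Σ s : Fin k, Fin (n s) × Fin (n s)) → ℝ) :=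
      {f | ∀ s, (matOf f s).det ≠ 0} with hUdef
    have hU : IsOpen U := by
      have : U = ⋂ s : Fin k, {f | (matOf f s).det ≠ 0} := by
        ext f; simp [hUdef]
      rw [this]
      refine isOpen_iInter_of_finite fun s => ?_
      have hcont : Continuous fun f : (Σ s : Fin k, Fin (n s) × Fin (n s)) → ℝ =>
          (matOf f s).det := by
        refine Continuous.matrix_det ?_
        exact continuous_pi fun a => continuous_pi fun b => continuous_apply _
      exact (isOpen_compl_singleton (x := (0 : ℝ))).preimage hcont
    -- the real solution as a point
    set y : (Σ s : Fin k, Fin (n s) × Fin (n s)) → ℝ := fun p => M p.1 p.2.1 p.2.2 with hy0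
    have hymat : ∀ s, matOf y s = M s := fun s => rfl
    have hy : T' y = 0 := by
      funext p
      simp only [hT', Tmap, LinearMap.coe_mk, AddHom.coe_mk, hymat, Pi.zero_apply]
      rw [hMe p.1]
      simp [hB']
    have hyU : y ∈ U := by
      intro s
      rw [hymat]
      exact fun h => (Matrix.isUnit_iff_isUnit_det (M s)).mp (hMu s) |>.ne_zero h
    obtain ⟨x, hx0, hxU⟩ := key T T' hTT' hU hy hyU
    refine ⟨matOf x, ?_, ?_⟩
    · intro s
      rw [Matrix.isUnit_iff_isUnit_det, isUnit_iff_ne_zero]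
      have := hxU s
      rw [hmat x s] at this
      intro h
      apply this
      rw [show ((↑) : ℚ → ℝ) = ⇑(Rat.castHom ℝ) from rfl, ← RingHom.mapMatrix_apply,
        ← RingHom.map_det, h]
      simp
    · intro j
      have hp : ∀ a b, (A j * matOf x (i j) - matOf x (l j) * B j) a b = 0 := by
        intro a b
        exact congrFun hx0 ⟨j, (a, b)⟩
      ext a b
      have := hp a b
      rw [Matrix.sub_apply, sub_eq_zero] at this
      exact this
  · rintro ⟨M, hMu, hMe⟩
    refine ⟨fun s => (M s).map ((↑) : ℚ → ℝ), fun s => ?_, fun j => ?_⟩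
    · show IsUnit ((M s).map ((↑) : ℚ → ℝ))
      rw [Matrix.isUnit_iff_isUnit_det, isUnit_iff_ne_zero,
        show ((↑) : ℚ → ℝ) = ⇑(Rat.castHom ℝ) from rfl, ← RingHom.mapMatrix_apply,
        ← RingHom.map_det]
      simpa using ((Matrix.isUnit_iff_isUnit_det (M s)).mp (hMu s)).ne_zero
    · rw [show ((↑) : ℚ → ℝ) = ⇑(Rat.castHom ℝ) from rfl, ← Matrix.map_mul, ← Matrix.map_mul,
        hMe j]

end Main
end

section
/- If f : T → S is an open morphism of transition systems over alphabet L (in the sense of Joyal–Nielsen–Winskel), then the induced morphism Π(f) : Π(T) → Π(S) between the associated diagrams of runs is an open morphism of diagrams; consequently, if T and S are bisimilar transition systems then Π(T) and Π(S) are bisimilar diagrams. -/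
open CategoryTheory

/-- A transition system over the alphabet `L`, with a set of states, an initial state
and a labelled transition relation. -/
structure TS (L : Type) where
  S : Type
  init : S
  tr : S → L → S → Prop

variable {L : Type}

/-- Validity of a sequence of steps `(a₁,s₁)(a₂,s₂)…` starting from a given state. -/
def TS.ValidFrom (T : TS L) : T.S → List (L × T.S) → Prop
  | _, [] => True
  | s, (a, t) :: r => T.tr s a t ∧ T.ValidFrom t r

/-- A (finite) run of `T` from its initial state. -/
def Run (T : TS L) : Type := {r : List (L × T.S) // T.ValidFrom T.init r}

/-- Runs are ordered by prefix. -/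
instance (T : TS L) : PartialOrder (Run T) where
  le r r' := r.val <+: r'.val
  le_refl _ := List.prefix_refl _
  le_trans _ _ _ h h' := List.IsPrefix.trans h h'
  le_antisymm _ _ h h' := Subtype.ext (List.IsPrefix.eq_of_length h (Nat.le_antisymm h.length_le h'.length_le))

/-- Words over `L`, ordered by the prefix relation (the poset `A_L`). -/
def Word (L : Type) : Type := List L

instance : PartialOrder (Word L) where
  le w w' := List.IsPrefix w w'
  le_refl _ := List.prefix_refl _
  le_trans _ _ _ h h' := List.IsPrefix.trans h h'
  le_antisymm _ _ h h' := List.IsPrefix.eq_of_length h (Nat.le_antisymm h.length_le h'.length_le)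

/-- The label word of a run. -/
def runLabels {T : TS L} (r : Run T) : Word L := r.val.map Prod.fst

lemma runLabels_monotone (T : TS L) : Monotone (runLabels (T := T)) := by
  intro r r' h
  obtain ⟨t, ht⟩ : r.val <+: r'.val := h
  exact ⟨t.map Prod.fst, by simp only [runLabels, ← List.map_append, ht]⟩

/-- The diagram `F_T : C_T ⥤ A_L` of a transition system `T`: the functor from the poset of
runs of `T` to the poset of words mapping a run to its label word, i.e. `Π(T)`. -/
def runDiag (T : TS L) : Run T ⥤ Word L := (runLabels_monotone T).functor

/-- A morphism of transition systems. -/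
@[ext] structure TSHom (T U : TS L) : Type where
  f : T.S → U.S
  hinit : f T.init = U.init
  htr : ∀ s a t, T.tr s a t → U.tr (f s) a (f t)

instance : Category (TS L) where
  Hom := TSHom
  id T := ⟨id, rfl, fun _ _ _ h => h⟩
  comp φ ψ := ⟨ψ.f ∘ φ.f, by simp [φ.hinit, ψ.hinit], fun s a t h => ψ.htr _ _ _ (φ.htr _ _ _ h)⟩
  id_comp _ := rfl
  comp_id _ := rfl
  assoc _ _ _ := rfl

lemma TSHom.validFrom_map {T U : TS L} (φ : TSHom T U) :
    ∀ (l : List (L × T.S)) (s : T.S), T.ValidFrom s l →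
      U.ValidFrom (φ.f s) (l.map (fun p => (p.1, φ.f p.2)))
  | [], _, _ => trivial
  | (_, t) :: l, _, h => ⟨φ.htr _ _ _ h.1, φ.validFrom_map l t h.2⟩

/-- The image of a run under a morphism of transition systems. -/
def TSHom.runMap {T U : TS L} (φ : TSHom T U) (r : Run T) : Run U :=
  ⟨r.val.map (fun p => (p.1, φ.f p.2)), φ.hinit ▸ φ.validFrom_map r.val T.init r.property⟩

lemma TSHom.runMap_monotone {T U : TS L} (φ : TSHom T U) : Monotone φ.runMap := by
  intro r r' h
  obtain ⟨t, ht⟩ : r.val <+: r'.val := h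
  exact ⟨t.map (fun p => (p.1, φ.f p.2)), by simp only [TSHom.runMap, ← List.map_append, ht]⟩

open CategoryTheory

universe v u

variable {A : Type u} [Category.{v} A]

/-- A morphism of transition systems is open (in the sense of Joyal–Nielsen–Winskel) if it
satisfies the path-lifting property: whenever the image of a run of `T` extends to a longer
run of `U`, the extension lifts to `T`. -/
def TSOpen {T U : TS L} (φ : TSHom T U) : Prop :=
  ∀ (r : Run T) (r' : Run U), φ.runMap r ≤ r' →
    ∃ r'' : Run T, r ≤ r'' ∧ φ.runMap r'' = r'

/-- Two transition systems are bisimilar if there is a span of open morphisms between them. -/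
def TSBisimilar (T U : TS L) : Prop :=
  ∃ (V : TS L) (φ : TSHom V T) (ψ : TSHom V U), TSOpen φ ∧ TSOpen ψ

/-- The morphism of diagrams `Π(φ) : Π(T) → Π(U)` induced by a morphism of transition
systems `φ : T → U`. -/
def PiMap {T U : TS L} (φ : TSHom T U) : DiagMor (runDiag T) (runDiag U) :=
  ⟨φ.runMap_monotone.functor,
    eqToIso (CategoryTheory.Functor.ext (F := runDiag T) (G := φ.runMap_monotone.functor ⋙ runDiag U)
      (fun r => show runLabels r = runLabels (φ.runMap r) by
        simp [runLabels, TSHom.runMap, List.map_map, Function.comp_def]; rfl))⟩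

lemma piMap_isOpen {L : Type} {T U : TS L} (φ : TSHom T U) (hφ : TSOpen φ) :
    (PiMap φ).IsOpen := by
  constructor
  · intro d
    have h0 : φ.runMap ⟨[], trivial⟩ ≤ d := List.nil_prefix
    obtain ⟨r'', _, hr⟩ := hφ ⟨[], trivial⟩ d h0
    exact ⟨r'', hr⟩
  · intro c d' j
    have hle : φ.runMap c ≤ d' := leOfHom j
    obtain ⟨c', hcc', hc'⟩ := hφ c d' hle
    exact ⟨c', homOfLE hcc', hc', Subsingleton.elim _ _⟩

/-- if `φ : T → U` is an open morphism of transition systems, then the induced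
morphism `Π(φ) : Π(T) → Π(U)` is an open morphism of diagrams; consequently, if `T` and `U`
are bisimilar transition systems then the diagrams `Π(T)` and `Π(U)` are bisimilar. -/
theorem stmt18 (L : Type) (T U : TS L) :
    (∀ φ : TSHom T U, TSOpen φ → (PiMap φ).IsOpen) ∧
    (TSBisimilar T U → Bisimilar (runDiag T) (runDiag U)) := by
  refine ⟨fun φ hφ => piMap_isOpen φ hφ, ?_⟩
  rintro ⟨V, φ, ψ, hφ, hψ⟩
  exact ⟨Cat.of (Run V), runDiag V, PiMap φ, PiMap ψ, piMap_isOpen φ hφ, piMap_isOpen ψ hψ⟩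
end

section
/- For transition systems T and S over an alphabet L, the diagrams Π(T) and Π(S) are bisimilar if and only if T and S are strongly bisimilar as transition systems. -/
open CategoryTheory

variable {L : Type}

open CategoryTheory

universe v u

variable {A : Type u} [Category.{v} A]

/-- Strong bisimilarity of transition systems: a relation on states containing the pair of
initial states such that transitions with the same label can be matched on both sides. -/
def StrongBisim (T U : TS L) : Prop :=
  ∃ R : T.S → U.S → Prop,
    R T.init U.init ∧
    (∀ s u, R s u → ∀ a t, T.tr s a t → ∃ t', U.tr u a t' ∧ R t t') ∧
    (∀ s u, R s u → ∀ a t', U.tr u a t' → ∃ t, T.tr s a t ∧ R t t')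


/-- The state reached from `s` after performing the steps in `l`. -/
def TS.endSt (T : TS L) (s : T.S) (l : List (L × T.S)) : T.S :=
  l.foldl (fun _ p => p.2) s

lemma TS.endSt_append (T : TS L) (s : T.S) (l m : List (L × T.S)) :
    T.endSt s (l ++ m) = T.endSt (T.endSt s l) m :=
  List.foldl_append

lemma TS.validFrom_append (T : TS L) :
    ∀ (l m : List (L × T.S)) (s : T.S),
      T.ValidFrom s (l ++ m) ↔ T.ValidFrom s l ∧ T.ValidFrom (T.endSt s l) m
  | [], m, s => by simp [TS.ValidFrom, TS.endSt]
  | (a, t) :: l, m, s => by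
      show T.tr s a t ∧ T.ValidFrom t (l ++ m) ↔
        (T.tr s a t ∧ T.ValidFrom t l) ∧ T.ValidFrom (T.endSt t l) m
      rw [T.validFrom_append l m t, and_assoc]

lemma extendRun {T U : TS L} (Rst : T.S → U.S → Prop)
    (hstep : ∀ s u, Rst s u → ∀ a t, T.tr s a t → ∃ t', U.tr u a t' ∧ Rst t t') :
    ∀ (m : List (L × T.S)) (s : T.S) (u : U.S), Rst s u → T.ValidFrom s m →
      ∃ m' : List (L × U.S), U.ValidFrom u m' ∧ m.map Prod.fst = m'.map Prod.fst ∧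
        Rst (T.endSt s m) (U.endSt u m')
  | [], s, u, h, _ => ⟨[], trivial, rfl, h⟩
  | (a, t) :: m, s, u, h, hv => by
      obtain ⟨t', ht', hR⟩ := hstep s u h a t hv.1
      obtain ⟨m', hv', hl, he⟩ := extendRun Rst hstep m t t' hR hv.2
      exact ⟨(a, t') :: m', ⟨ht', hv'⟩, by simp [hl], he⟩

lemma iso_labels {T U : TS L} {c : Run T} {d : Run U}
    (g : (runDiag T).obj c ≅ (runDiag U).obj d) : runLabels c = runLabels d :=
  le_antisymm (leOfHom g.hom) (leOfHom g.inv)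

lemma iso_labels' {T U : TS L} {c : Run T} {d : Run U}
    (g : (runDiag T).obj c ≅ (runDiag U).obj d) :
    c.val.map Prod.fst = d.val.map Prod.fst := iso_labels g

/-- the diagrams `Π(T)` and `Π(U)` are bisimilar if and only if the transition
systems `T` and `U` are strongly bisimilar. -/
theorem stmt19 (L : Type) (T U : TS L) :
    (∃ R : Set (BisimTriple (runDiag T) (runDiag U)),
        IsBisimulation (runDiag T) (runDiag U) R) ↔
      StrongBisim T U := by
  constructor
  · rintro ⟨R, h1, h2, h3, h4⟩
    refine ⟨fun s u => ∃ x : BisimTriple (runDiag T) (runDiag U), x ∈ R ∧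
      T.endSt T.init x.1.val = s ∧ U.endSt U.init x.2.1.val = u, ?_, ?_, ?_⟩
    · obtain ⟨d, f, hf⟩ := h3 ⟨[], trivial⟩
      have hd : d.val = [] := by
        have h0 : ([] : List (L × T.S)).map Prod.fst = d.val.map Prod.fst := iso_labels' f
        exact List.map_eq_nil_iff.mp h0.symm
      exact ⟨⟨⟨[], trivial⟩, d, f⟩, hf, rfl, by simp [hd, TS.endSt]⟩
    · rintro s u ⟨⟨c, d, g⟩, hR, rfl, rfl⟩ a t htr
      have hc' : T.ValidFrom T.init (c.val ++ [(a, t)]) :=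
        (T.validFrom_append c.val [(a, t)] T.init).mpr ⟨c.prop, htr, trivial⟩
      obtain ⟨d', j, g', _, hmem⟩ := h1 ⟨c, d, g⟩ hR ⟨c.val ++ [(a, t)], hc'⟩
        (homOfLE ⟨[(a, t)], rfl⟩)
      obtain ⟨m', hm'⟩ : d.val <+: d'.val := leOfHom j
      have hlab : c.val.map Prod.fst = d.val.map Prod.fst := iso_labels' g
      have hlab' : (c.val ++ [(a, t)]).map Prod.fst = d'.val.map Prod.fst := iso_labels' g'
      have hlen : c.val.length = d.val.length := by
        have := congrArg List.length hlab; simpa using this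
      have hlen' : m'.length = 1 := by
        have := congrArg List.length hlab'
        simp [← hm'] at this
        omega
      obtain ⟨p, rfl⟩ := List.length_eq_one_iff.mp hlen'
      have ha : p.1 = a := by
        have h5 : c.val.map Prod.fst ++ [a] = d.val.map Prod.fst ++ [p.1] := by
          simpa [← hm'] using hlab'
        rw [hlab] at h5
        simpa using (List.append_cancel_left h5).symm
      have hval := d'.prop
      rw [← hm'] at hval
      have hvd : U.tr (U.endSt U.init d.val) p.1 p.2 :=
        ((U.validFrom_append d.val [p] U.init).mp hval).2.1
      refine ⟨p.2, ha ▸ hvd, ⟨⟨_, d', g'⟩, hmem, ?_, ?_⟩⟩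
      · simp [TS.endSt, List.foldl_append]
      · rw [← hm']
        simp [TS.endSt, List.foldl_append]
    · rintro s u ⟨⟨c, d, g⟩, hR, rfl, rfl⟩ a t' htr
      have hd' : U.ValidFrom U.init (d.val ++ [(a, t')]) :=
        (U.validFrom_append d.val [(a, t')] U.init).mpr ⟨d.prop, htr, trivial⟩
      obtain ⟨c', i, g', _, hmem⟩ := h2 ⟨c, d, g⟩ hR ⟨d.val ++ [(a, t')], hd'⟩
        (homOfLE ⟨[(a, t')], rfl⟩)
      obtain ⟨m', hm'⟩ : c.val <+: c'.val := leOfHom i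
      have hlab : c.val.map Prod.fst = d.val.map Prod.fst := iso_labels' g
      have hlab' : c'.val.map Prod.fst = (d.val ++ [(a, t')]).map Prod.fst := iso_labels' g'
      have hlen : c.val.length = d.val.length := by
        have := congrArg List.length hlab; simpa using this
      have hlen' : m'.length = 1 := by
        have := congrArg List.length hlab'
        simp [← hm'] at this
        omega
      obtain ⟨p, rfl⟩ := List.length_eq_one_iff.mp hlen'
      have ha : p.1 = a := by
        have h5 : c.val.map Prod.fst ++ [p.1] = d.val.map Prod.fst ++ [a] := by
          simpa [← hm'] using hlab'
        rw [hlab] at h5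
        simpa using List.append_cancel_left h5
      have hval := c'.prop
      rw [← hm'] at hval
      have hvc : T.tr (T.endSt T.init c.val) p.1 p.2 :=
        ((T.validFrom_append c.val [p] T.init).mp hval).2.1
      refine ⟨p.2, ha ▸ hvc, ⟨⟨c', _, g'⟩, hmem, ?_, ?_⟩⟩
      · rw [← hm']
        simp [TS.endSt, List.foldl_append]
      · simp [TS.endSt, List.foldl_append]
  · rintro ⟨Rst, hinit, hfwd, hbwd⟩
    refine ⟨{x | runLabels x.1 = runLabels x.2.1 ∧
      Rst (T.endSt T.init x.1.val) (U.endSt U.init x.2.1.val)}, ?_, ?_, ?_, ?_⟩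
    · rintro ⟨c, d, g⟩ ⟨hlab, hst⟩ c' i
      obtain ⟨m, hm⟩ : c.val <+: c'.val := leOfHom i
      have hval := c'.prop
      rw [← hm] at hval
      obtain ⟨m', hv', hl, he⟩ := extendRun Rst hfwd m _ _ hst
        ((T.validFrom_append c.val m T.init).mp hval).2
      have hlabL : c.val.map Prod.fst = d.val.map Prod.fst := hlab
      refine ⟨⟨d.val ++ m', (U.validFrom_append d.val m' U.init).mpr ⟨d.prop, hv'⟩⟩,
        homOfLE ⟨m', rfl⟩, eqToIso ?_, Subsingleton.elim _ _, ?_, ?_⟩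
      · show c'.val.map Prod.fst = (d.val ++ m').map Prod.fst
        simp only [← hm, List.map_append, hlabL, hl]
      · show c'.val.map Prod.fst = (d.val ++ m').map Prod.fst
        simp only [← hm, List.map_append, hlabL, hl]
      · show Rst (T.endSt T.init c'.val) (U.endSt U.init (d.val ++ m'))
        rw [← hm, T.endSt_append, U.endSt_append]
        exact he
    · rintro ⟨c, d, g⟩ ⟨hlab, hst⟩ d' j
      obtain ⟨m, hm⟩ : d.val <+: d'.val := leOfHom j
      have hval := d'.prop
      rw [← hm] at hval
      obtain ⟨m', hv', hl, he⟩ := extendRun (fun u s => Rst s u)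
        (fun u s h => hbwd s u h) m _ _ hst
        ((U.validFrom_append d.val m U.init).mp hval).2
      have hlabL : c.val.map Prod.fst = d.val.map Prod.fst := hlab
      refine ⟨⟨c.val ++ m', (T.validFrom_append c.val m' T.init).mpr ⟨c.prop, hv'⟩⟩,
        homOfLE ⟨m', rfl⟩, eqToIso ?_, Subsingleton.elim _ _, ?_, ?_⟩
      · show (c.val ++ m').map Prod.fst = d'.val.map Prod.fst
        simp only [← hm, List.map_append, hlabL, hl]
      · show (c.val ++ m').map Prod.fst = d'.val.map Prod.fst
        simp only [← hm, List.map_append, hlabL, hl]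
      · show Rst (T.endSt T.init (c.val ++ m')) (U.endSt U.init d'.val)
        rw [← hm, T.endSt_append, U.endSt_append]
        exact he
    · intro c
      obtain ⟨m', hv', hl, he⟩ := extendRun Rst hfwd c.val T.init U.init hinit c.prop
      exact ⟨⟨m', hv'⟩, eqToIso hl, hl, he⟩
    · intro d
      obtain ⟨m', hv', hl, he⟩ := extendRun (fun u s => Rst s u)
        (fun u s h => hbwd s u h) d.val U.init T.init hinit d.prop
      exact ⟨⟨m', hv'⟩, eqToIso hl.symm, hl.symm, he⟩
end
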